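/- Let n ≥ 1 and let X, Y : ℝ → (n×n real matrices) be differentiable at a point t, with Y_s symmetric for all s and X_s invertible for all s in a neighbourhood of t. Then tr( (d/ds)|_{s=t}(X_s⁻¹·Y_s·X_s⁻ᵀ) · X_tᵀ·X_t ) = (d/ds)|_{s=t} tr Y_s − 2·tr( (dX_s/ds)|_{s=t} · X_t⁻¹ · Y_t ). -/

import Mathlib

open Matrix

private lemma hasDerivAt_matrix_mul {n : ℕ} {A B : ℝ → Matrix (Fin n) (Fin n) ℝ}
    {A' B' : Matrix (Fin n) (Fin n) ℝ} {t : ℝ}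
    (hA : ∀ i j, HasDerivAt (fun s => A s i j) (A' i j) t)
    (hB : ∀ i j, HasDerivAt (fun s => B s i j) (B' i j) t) :
    ∀ i j, HasDerivAt (fun s => (A s * B s) i j) ((A' * B t + A t * B') i j) t := by
  intro i j
  have h : (fun s => (A s * B s) i j) = fun s => ∑ k, A s i k * B s k j := by
    funext s; simp [Matrix.mul_apply]
  rw [h]
  simp only [Matrix.add_apply, Matrix.mul_apply, ← Finset.sum_add_distrib]
  exact HasDerivAt.fun_sum fun k _ => (hA i k).mul (hB k j)

/-- The trace identity
`tr( (d/dt)(X⁻¹ Y X⁻ᵀ) · XᵀX ) = (d/dt) tr Y - 2 tr( (dX/dt) X⁻¹ Y )`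
for a differentiable family of invertible `X_t` and symmetric `Y_t`. -/
theorem trace_derivative_identity (n : ℕ) (hn : 1 ≤ n)
    (X Y : ℝ → Matrix (Fin n) (Fin n) ℝ)
    (X' Y' M' : Matrix (Fin n) (Fin n) ℝ) (t : ℝ)
    (hYs : ∀ s, (Y s).IsSymm)
    (hXinv : ∀ᶠ s in nhds t, IsUnit (X s).det)
    (hX : ∀ i j, HasDerivAt (fun s => X s i j) (X' i j) t)
    (hY : ∀ i j, HasDerivAt (fun s => Y s i j) (Y' i j) t)
    (hM : ∀ i j, HasDerivAt (fun s => ((X s)⁻¹ * Y s * ((X s)⁻¹)ᵀ) i j) (M' i j) t) :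
    (M' * ((X t)ᵀ * X t)).trace = Y'.trace - 2 * (X' * (X t)⁻¹ * Y t).trace := by
  have ht : IsUnit (X t).det := hXinv.self_of_nhds
  set M : ℝ → Matrix (Fin n) (Fin n) ℝ := fun s => (X s)⁻¹ * Y s * ((X s)⁻¹)ᵀ with hMdef
  have hXT : ∀ i j, HasDerivAt (fun s => (X s)ᵀ i j) (X'ᵀ i j) t := by
    intro i j; simpa [Matrix.transpose_apply] using hX j i
  have hP := hasDerivAt_matrix_mul hX hM
  have hQ := hasDerivAt_matrix_mul hP hXT
  -- eventually X s * M s * (X s)ᵀ = Y s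
  have heq : ∀ᶠ s in nhds t, X s * M s * (X s)ᵀ = Y s := by
    filter_upwards [hXinv] with s hs
    have h1 : X s * (X s)⁻¹ = 1 := Matrix.mul_nonsing_inv _ hs
    calc X s * ((X s)⁻¹ * Y s * ((X s)⁻¹)ᵀ) * (X s)ᵀ
        = (X s * (X s)⁻¹) * Y s * ((X s * (X s)⁻¹)ᵀ) := by
          rw [Matrix.transpose_mul]; noncomm_ring [Matrix.mul_assoc]
      _ = Y s := by rw [h1]; simp
  have hYeq : Y' = (X' * M t + X t * M') * (X t)ᵀ + (X t * M t) * X'ᵀ := by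
    ext i j
    refine (hY i j).unique ?_
    refine (hQ i j).congr_of_eventuallyEq ?_
    filter_upwards [heq] with s hs
    rw [hs]
  -- trace identities
  have hXMt : X t * M t = Y t * ((X t)⁻¹)ᵀ := by
    rw [hMdef]
    rw [← Matrix.mul_assoc, ← Matrix.mul_assoc, Matrix.mul_nonsing_inv _ ht, Matrix.one_mul]
  have hinvT : ((X t)⁻¹)ᵀ * (X t)ᵀ = 1 := by
    rw [← Matrix.transpose_mul, Matrix.mul_nonsing_inv _ ht, Matrix.transpose_one]
  have h1 : X' * M t * (X t)ᵀ = X' * (X t)⁻¹ * Y t := by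
    rw [hMdef]
    calc X' * ((X t)⁻¹ * Y t * ((X t)⁻¹)ᵀ) * (X t)ᵀ
        = X' * (X t)⁻¹ * Y t * (((X t)⁻¹)ᵀ * (X t)ᵀ) := by noncomm_ring [Matrix.mul_assoc]
      _ = X' * (X t)⁻¹ * Y t := by rw [hinvT, Matrix.mul_one]
  have h2 : (X t * M t * X'ᵀ).trace = (X' * (X t)⁻¹ * Y t).trace := by
    rw [hXMt]
    have : Y t * ((X t)⁻¹)ᵀ * X'ᵀ = (X' * (X t)⁻¹ * Y t)ᵀ := by
      rw [Matrix.transpose_mul, Matrix.transpose_mul, (hYs t).eq, Matrix.mul_assoc]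
    rw [this, Matrix.trace_transpose]
  have h3 : (X t * M' * (X t)ᵀ).trace = (M' * ((X t)ᵀ * X t)).trace := by
    rw [← Matrix.mul_assoc, ← Matrix.trace_mul_cycle]
  rw [hYeq]
  rw [Matrix.add_mul, Matrix.trace_add, Matrix.trace_add, h1, h2, h3]
  ring
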